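/- Let G be a group and K a subgroup of G. Let G♭K denote the kernel of the homomorphism K ∗ G →* G from the free product that is trivial on K and the identity on G, and let φ : K ∗ G →* G be the homomorphism whose restriction to K is the subgroup inclusion K ↪ G and whose restriction to G is the identity. Then the image Subgroup.map φ (G♭K) equals the normal closure of K in G. -/
import Mathlib

/-- For a subgroup `K` of `G`, the image under
`φ = Monoid.Coprod.lift K.subtype (MonoidHom.id G) : K ∗ G →* G` of
`G♭K = ker(Monoid.Coprod.lift 1 (MonoidHom.id G) : K ∗ G →* G)` is the
normal closure of `K` in `G`. -/
theorem map_flat_eq_normalClosure {G : Type*} [Group G] (K : Subgroup G) :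
    Subgroup.map (Monoid.Coprod.lift K.subtype (MonoidHom.id G))
      (MonoidHom.ker (Monoid.Coprod.lift (1 : ↥K →* G) (MonoidHom.id G))) =
      Subgroup.normalClosure (K : Set G) := by
  set N := Subgroup.normalClosure (K : Set G) with hNdef
  have hNnormal : N.Normal := Subgroup.normalClosure_normal
  apply le_antisymm
  · rintro x ⟨w, hw, rfl⟩
    have hq : (QuotientGroup.mk' N).comp (Monoid.Coprod.lift K.subtype (MonoidHom.id G)) =
        (QuotientGroup.mk' N).comp (Monoid.Coprod.lift (1 : ↥K →* G) (MonoidHom.id G)) := by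
      apply Monoid.Coprod.hom_ext
      · ext k
        simp only [MonoidHom.comp_apply, Monoid.Coprod.lift_apply_inl,
          Subgroup.coe_subtype, MonoidHom.one_apply, map_one]
        rw [QuotientGroup.mk'_apply, QuotientGroup.eq_one_iff]
        exact Subgroup.subset_normalClosure k.2
      · rfl
    have : QuotientGroup.mk' N (Monoid.Coprod.lift K.subtype (MonoidHom.id G) w) = 1 := by
      have := congrArg (fun f => f w) hq
      simp only [MonoidHom.comp_apply] at this
      rw [this, MonoidHom.mem_ker.mp hw, map_one]
    rwa [← QuotientGroup.eq_one_iff]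
  · haveI : (Subgroup.map (Monoid.Coprod.lift K.subtype (MonoidHom.id G))
        (MonoidHom.ker (Monoid.Coprod.lift (1 : ↥K →* G) (MonoidHom.id G)))).Normal := by
      constructor
      intro n hn g
      rcases hn with ⟨w, hw, rfl⟩
      refine ⟨Monoid.Coprod.inr g * w * Monoid.Coprod.inr g⁻¹, ?_, by simp⟩
      simp only [SetLike.mem_coe, MonoidHom.mem_ker, map_mul, map_inv] at hw ⊢
      simp [hw]
    apply Subgroup.normalClosure_le_normal
    intro k hk
    exact ⟨Monoid.Coprod.inl ⟨k, hk⟩, by simp [MonoidHom.mem_ker], by simp⟩
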